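/- Let A be a von Neumann hyperring and e₁,…,eₙ idempotent elements with eᵢeⱼ = 0 for all i ≠ j and 1 ∈ e₁+⋯+eₙ. If eᵢ + eᵢᶜ = {1} for every i = 1,…,n, then e₁+⋯+eₙ = {1}. -/

import Mathlib

universe u v

/-- A multiring: a commutative monoid with a multivalued addition. -/
class Multiring (A : Type u) extends CommMonoid A, Zero A, Neg A where
  /-- the multivalued sum: `madd b c` is the set `b + c` -/
  madd : A → A → Set A
  madd_nonempty : ∀ a b : A, (madd a b).Nonempty
  madd_rev_left : ∀ a b c : A, a ∈ madd b c → c ∈ madd (-b) a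
  madd_rev_right : ∀ a b c : A, a ∈ madd b c → b ∈ madd a (-c)
  mem_madd_zero : ∀ a b : A, a ∈ madd b 0 ↔ a = b
  madd_assoc : ∀ a b c g x : A, g ∈ madd a b → x ∈ madd g c →
    ∃ h ∈ madd b c, x ∈ madd a h
  madd_comm : ∀ a b : A, madd a b = madd b a
  mul_zero' : ∀ a : A, a * 0 = 0
  madd_mul : ∀ a b c d : A, a ∈ madd b c → a * d ∈ madd (b * d) (c * d)

namespace Multiring

variable {A : Type u} [Multiring A]

/-- the iterated multivalued sum `x₁ + ⋯ + xₙ = {x₁} + (x₂ + ⋯ + xₙ)` of a list -/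
def listSum : List A → Set A
  | [] => {(0 : A)}
  | a :: l => {x : A | ∃ y ∈ listSum l, x ∈ madd a y}

/-- an ideal of a multiring: a nonempty subset with `I + I ⊆ I` and `A·I ⊆ I` -/
def IsIdeal (I : Set A) : Prop :=
  I.Nonempty ∧ (∀ a ∈ I, ∀ b ∈ I, madd a b ⊆ I) ∧ ∀ a : A, ∀ b ∈ I, a * b ∈ I

/-- a prime ideal: a proper ideal such that `a*b ∈ p → a ∈ p ∨ b ∈ p` -/
def IsPrimeIdeal (I : Set A) : Prop :=
  IsIdeal I ∧ (1 : A) ∉ I ∧ ∀ a b : A, a * b ∈ I → a ∈ I ∨ b ∈ I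

/-- a maximal ideal: a proper ideal maximal among proper ideals -/
def IsMaximalIdeal (I : Set A) : Prop :=
  IsIdeal I ∧ (1 : A) ∉ I ∧ ∀ J : Set A, IsIdeal J → (1 : A) ∉ J → I ⊆ J → J = I

/-- a multiplicative subset -/
def IsMultiplicative (S : Set A) : Prop :=
  (1 : A) ∈ S ∧ ∀ s ∈ S, ∀ t ∈ S, s * t ∈ S

/-- a hyperring: a multiring with the strong distributivity property -/
def IsHyperring (A : Type u) [Multiring A] : Prop :=
  ∀ x b c d : A, x ∈ madd (b * d) (c * d) → ∃ a ∈ madd b c, x = a * d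

/-- a von Neumann (regular) hyperring -/
def IsVonNeumann (A : Type u) [Multiring A] : Prop :=
  IsHyperring A ∧ ∀ a : A, ∃ b : A, a = a * a * b

/-- the equivalence modulo an ideal `I`: `a ∼_I b` iff `(a + (-b)) ∩ I ≠ ∅`;
this is equality of classes in the quotient multiring `A/I`. -/
def simI (I : Set A) (a b : A) : Prop := ∃ x ∈ madd a (-b), x ∈ I

/-- membership of classes in the multivalued sum of the quotient `A/I`:
`[a] ∈ [b] + [c]` iff `a ∈ b + c + i` for some `i ∈ I`. -/
def qmemI (I : Set A) (a b c : A) : Prop := ∃ i ∈ I, ∃ w ∈ madd c i, a ∈ madd b w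

/-- representatives `x` with `[x] ∈ [c₁] + ⋯ + [cₙ]` in the quotient `A/I` -/
def qlistSumI (I : Set A) : List A → Set A
  | [] => {x : A | simI I x 0}
  | c :: l => {x : A | ∃ y ∈ qlistSumI I l, qmemI I x c y}

/-- the quotient multiring `A/I` is a multifield: `1 ≠ 0` and every nonzero
element is weak-invertible -/
def QuotIsMultifield (I : Set A) : Prop :=
  ¬ simI I 1 0 ∧
    ∀ a : A, ¬ simI I a 0 →
      ∃ l : List A, l ≠ [] ∧ (1 : A) ∈ qlistSumI I (l.map fun b => a * b)

/-- the quotient multiring `A/I` is a hyperfield: `1 ≠ 0` and every nonzero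
element is invertible -/
def QuotIsHyperfield (I : Set A) : Prop :=
  ¬ simI I 1 0 ∧ ∀ a : A, ¬ simI I a 0 → ∃ b : A, simI I (a * b) 1

/-- the Marshall equivalence associated to a multiplicative set `S`:
`a ∼_S b` iff `as = bt` for some `s,t ∈ S`; this is equality of classes in the
Marshall quotient `A/ₘS`. -/
def simM (S : Set A) (a b : A) : Prop := ∃ s ∈ S, ∃ t ∈ S, a * s = b * t

/-- `S̄ = {x : xs ∈ S for some s ∈ S}` -/
def mbar (S : Set A) : Set A := {x : A | ∃ s ∈ S, x * s ∈ S}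

/-- membership of classes in the multivalued sum of the Marshall quotient `A/ₘS`:
`[a] ∈ [b] + [c]` iff `as ∈ bt + cu` for some `s,t,u ∈ S`. -/
def qmemM (S : Set A) (a b c : A) : Prop :=
  ∃ s ∈ S, ∃ t ∈ S, ∃ u ∈ S, a * s ∈ madd (b * t) (c * u)

/-- representatives `x` with `[x] ∈ [c₁] + ⋯ + [cₙ]` in the Marshall quotient `A/ₘS` -/
def qlistSumM (S : Set A) : List A → Set A
  | [] => {x : A | simM S x 0}
  | c :: l => {x : A | ∃ y ∈ qlistSumM S l, qmemM S x c y}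

/-- the multivalued sum of the hyperfield `3 = {-1, 0, 1}` -/
def signAdd : SignType → SignType → Set SignType
  | SignType.zero, x => {x}
  | x, SignType.zero => {x}
  | SignType.pos, SignType.pos => {SignType.pos}
  | SignType.neg, SignType.neg => {SignType.neg}
  | _, _ => Set.univ

/-- a multiring morphism `A → 3`, i.e. an order of `A` -/
def IsSignMorphism (σ : A → SignType) : Prop :=
  (∀ a b c : A, a ∈ madd b c → σ a ∈ signAdd (σ b) (σ c)) ∧
  (∀ a b : A, σ (a * b) = σ a * σ b) ∧
  (∀ a : A, σ (-a) = -(σ a)) ∧ σ 0 = 0 ∧ σ 1 = 1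

/-- a prime cone of a multiring -/
def IsPrimeCone (P : Set A) : Prop :=
  (∀ a : A, a * a ∈ P) ∧ (∀ a ∈ P, ∀ b ∈ P, madd a b ⊆ P) ∧
  (∀ a ∈ P, ∀ b ∈ P, a * b ∈ P) ∧ (∀ a : A, a ∈ P ∨ -a ∈ P) ∧
  IsPrimeIdeal {x : A | x ∈ P ∧ -x ∈ P}

open Classical in
/-- the map `σ_P : A → 3` associated to a prime cone `P` -/
noncomputable def sigmaOf (P : Set A) (a : A) : SignType :=
  if a ∈ P ∧ -a ∈ P then 0 else if a ∈ P then 1 else -1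

/-- `ΣA²`: the set of elements lying in some finite sum of squares -/
def SumsOfSquares (A : Type u) [Multiring A] : Set A :=
  {x : A | ∃ l : List A, l ≠ [] ∧ x ∈ listSum (l.map fun a => a * a)}

/-- a multiring is semi-real when `-1 ∉ ΣA²` -/
def IsSemiReal (A : Type u) [Multiring A] : Prop := (-(1 : A)) ∉ SumsOfSquares A

/-- a real reduced multiring -/
def IsRealReduced (A : Type u) [Multiring A] : Prop :=
  IsSemiReal A ∧ (∀ a : A, a * a * a = a) ∧
  (∀ a b : A, madd a (a * b * b) = {a}) ∧
  (∀ a b : A, ∃ c : A, madd (a * a) (b * b) = {c})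

/-- a hyperfield: a hyperring with `1 ≠ 0` and all nonzero elements invertible -/
def IsHyperfield (A : Type u) [Multiring A] : Prop :=
  IsHyperring A ∧ (1 : A) ≠ 0 ∧ ∀ a : A, a ≠ 0 → ∃ b : A, a * b = 1

/-- a morphism of multirings -/
def IsMorphism {B : Type v} [Multiring B] (f : A → B) : Prop :=
  (∀ a b c : A, a ∈ madd b c → f a ∈ madd (f b) (f c)) ∧
  (∀ a b : A, f (a * b) = f a * f b) ∧
  (∀ a : A, f (-a) = -(f a)) ∧ f 0 = 0 ∧ f 1 = 1

/-- the radical `√α = {x : xⁿ ∈ α for some n ≥ 1}` of an ideal -/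
def radical (α : Set A) : Set A := {x : A | ∃ n : ℕ, 1 ≤ n ∧ x ^ n ∈ α}

/-- the ideal `(x) = ∪ {t₁x + ⋯ + tₙx}` generated by `x` -/
def genIdeal (x : A) : Set A :=
  {y : A | ∃ l : List A, l ≠ [] ∧ y ∈ listSum (l.map fun t => t * x)}

/-- `S_a = {x : aⁿ ∈ (x) for some n ≥ 0}` -/
def Sgen (a : A) : Set A := {x : A | ∃ n : ℕ, a ^ n ∈ genIdeal x}

/-- `a` is weak-invertible when `1 ∈ ab₁ + ⋯ + abₙ` for some `b₁,…,bₙ` -/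
def WeakInvertible (a : A) : Prop :=
  ∃ l : List A, l ≠ [] ∧ (1 : A) ∈ listSum (l.map fun b => a * b)

/-- the prime spectrum of a multiring -/
abbrev Spec (A : Type u) [Multiring A] : Type u := {p : Set A // IsPrimeIdeal p}

/-- the spectral topology on `spec A`, generated by the sets `D(a) = {p : a ∉ p}` -/
instance : TopologicalSpace (Spec A) :=
  TopologicalSpace.generateFrom {U : Set (Spec A) | ∃ a : A, U = {p : Spec A | a ∉ p.1}}

/-- the Marshall quotient `A/ₘS` is a real reduced multiring (expressed on
representatives) -/
def QuotIsRealReduced (S : Set A) : Prop :=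
  (∀ l : List A, l ≠ [] → (-(1 : A)) ∉ qlistSumM S (l.map fun a => a * a)) ∧
  (∀ a : A, simM S (a * a * a) a) ∧
  (∀ a b x : A, qmemM S x a (a * b * b) ↔ simM S x a) ∧
  (∀ a b : A, ∃ c : A, ∀ x : A, qmemM S x (a * a) (b * b) ↔ simM S x c)

/-- the Marshall quotient `A/ₘS` is a geometric von Neumann hyperring
(expressed on representatives): it is a hyperring, von Neumann regular, and
`e + eᶜ = {1}` for every idempotent `e` -/
def QuotGeometricVN (S : Set A) : Prop :=
  (∀ x b c d : A, qmemM S x (b * d) (c * d) → ∃ a : A, qmemM S a b c ∧ simM S x (a * d)) ∧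
  (∀ a : A, ∃ b : A, simM S a (a * a * b)) ∧
  (∀ e x : A, simM S (e * e) e → qmemM S x 1 (-e) → simM S (e * x) 0 →
    ∀ y : A, qmemM S y e x ↔ simM S y 1)

/-- a von Neumann subgroup: a multiplicative set such that for every idempotent
`a` (with complement `aᶜ`) and every `x ∈ D_S(a, aᶜ)` there is `s ∈ S` with `xs ∈ S` -/
def IsVNSubgroup (S : Set A) : Prop :=
  IsMultiplicative S ∧
    ∀ a x ac : A, a * a = a → ac ∈ madd 1 (-a) → a * ac = 0 →
      (∃ u ∈ S, ∃ v ∈ S, ∃ w ∈ S, x * u ∈ madd (a * v) (ac * w)) →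
      ∃ s ∈ S, x * s ∈ S

/-- a preorder of a multiring -/
def IsPreorderSet (T : Set A) : Prop :=
  (∀ a : A, a * a ∈ T) ∧ (∀ a ∈ T, ∀ b ∈ T, a * b ∈ T) ∧ (∀ a ∈ T, ∀ b ∈ T, madd a b ⊆ T)

/-- `1 + T = ∪ {1 + t : t ∈ T}` -/
def oneAdd (T : Set A) : Set A := {x : A | ∃ t ∈ T, x ∈ madd 1 t}

/-- `ΣḞ²`: elements lying in some finite sum of squares of nonzero elements -/
def sumSqNonzero (A : Type u) [Multiring A] : Set A :=
  {x : A | ∃ l : List A, l ≠ [] ∧ (∀ a ∈ l, a ≠ 0) ∧ x ∈ listSum (l.map fun a => a * a)}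

end Multiring


namespace Multiring

variable {A : Type u} [Multiring A]

lemma zero_mem_neg' (a : A) : (0:A) ∈ madd (-a) a :=
  madd_rev_left a a 0 ((mem_madd_zero a a).2 rfl)

lemma neg_neg'' (a : A) : -(-a) = a := by
  have h := madd_rev_left 0 (-a) a (zero_mem_neg' a)
  exact ((mem_madd_zero a (-(-a))).1 h).symm

lemma zero_mul'' (a : A) : (0:A) * a = 0 := by rw [mul_comm]; exact mul_zero' a

lemma neg_mul'' (a b : A) : (-a) * b = -(a * b) := by
  have h := madd_mul 0 (-a) a b (zero_mem_neg' a)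
  rw [zero_mul''] at h
  have h2 := madd_rev_left _ _ _ h
  have h3 := (mem_madd_zero (a*b) (-((-a)*b))).1 h2
  rw [h3, neg_neg'']

lemma neg_zero'' : (-(0:A)) = 0 := by
  have h := neg_mul'' (1:A) 0
  rw [mul_zero', mul_zero'] at h
  exact h.symm

lemma listSum_all_zero : ∀ (l : List A), (∀ a ∈ l, a = 0) → ∀ x ∈ listSum l, x = 0 := by
  intro l
  induction l with
  | nil => intro _ x hx; exact hx
  | cons a l ih =>
    intro h x hx
    obtain ⟨y, hy, hxy⟩ := hx
    have hy0 := ih (fun b hb => h b (List.mem_cons_of_mem _ hb)) y hy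
    rw [h a (List.mem_cons_self), hy0] at hxy
    exact (mem_madd_zero x 0).1 hxy

lemma listSum_mul (d : A) : ∀ (l : List A) (x : A),
    x ∈ listSum l → x * d ∈ listSum (l.map (· * d)) := by
  intro l
  induction l with
  | nil =>
    intro x hx
    have hx0 : x = 0 := hx
    show x * d ∈ ({0} : Set A)
    rw [hx0, zero_mul'']
    rfl
  | cons a l ih =>
    intro x hx
    obtain ⟨y, hy, hxy⟩ := hx
    exact ⟨y * d, ih y hy, madd_mul x a y d hxy⟩

lemma key_singleton (hH : IsHyperring A) :
    ∀ L : List (A × A),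
      (∀ p ∈ L, p.1 * p.1 = p.1 ∧ p.2 ∈ madd 1 (-p.1) ∧ p.1 * p.2 = 0 ∧ madd p.1 p.2 = {1}) →
      L.Pairwise (fun p q => p.1 * q.1 = 0) →
      ∀ x ∈ listSum (L.map Prod.fst), ∀ x' ∈ listSum (L.map Prod.fst), x = x' := by
  intro L
  induction L with
  | nil =>
    intro _ _ x hx x' hx'
    have h1 : x = 0 := hx
    have h2 : x' = 0 := hx'
    rw [h1, h2]
  | cons p L ih =>
    intro hprops hpair x hx x' hx'
    obtain ⟨e, c⟩ := p
    obtain ⟨hidem, hcmem, hec, hcompl⟩ := hprops _ (List.mem_cons_self)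
    obtain ⟨y, hy, hxy⟩ := hx
    obtain ⟨y', hy', hxy'⟩ := hx'
    have horth : ∀ q ∈ L, e * q.1 = 0 := (List.pairwise_cons.1 hpair).1
    -- z * e = 0 for z in the tail sum
    have hye : ∀ z, z ∈ listSum (L.map Prod.fst) → z * e = 0 := by
      intro z hz
      have h := listSum_mul e _ _ hz
      rw [List.map_map] at h
      refine listSum_all_zero _ ?_ _ h
      intro a ha
      simp only [List.mem_map, Function.comp] at ha
      obtain ⟨q, hq, rfl⟩ := ha
      show q.1 * e = 0
      rw [mul_comm]
      exact horth q hq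
    -- x * e = e and x' * e = e
    have hxe : x * e = e := by
      have h := madd_mul x e y e hxy
      rw [hidem, hye y hy] at h
      exact (mem_madd_zero _ _).1 h
    have hxe' : x' * e = e := by
      have h := madd_mul x' e y' e hxy'
      rw [hidem, hye y' hy'] at h
      exact (mem_madd_zero _ _).1 h
    -- q.1 * c = q.1 for q in tail
    have hfc : ∀ q ∈ L, q.1 * c = q.1 := by
      intro q hq
      have h := madd_mul c 1 (-e) q.1 hcmem
      rw [one_mul, neg_mul'', horth q hq, neg_zero''] at h
      have h2 := (mem_madd_zero _ _).1 h
      rw [mul_comm] at h2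
      exact h2
    -- z * c stays in the tail sum
    have hyc : ∀ z, z ∈ listSum (L.map Prod.fst) → z * c ∈ listSum (L.map Prod.fst) := by
      intro z hz
      have h := listSum_mul c _ _ hz
      rw [List.map_map] at h
      have heq : L.map ((· * c) ∘ Prod.fst) = L.map Prod.fst := by
        refine List.map_congr_left ?_
        intro q hq
        exact hfc q hq
      rwa [heq] at h
    -- x * c = y * c
    have hxc : x * c = y * c := by
      have h := madd_mul x e y c hxy
      rw [hec, madd_comm] at h
      exact (mem_madd_zero _ _).1 h
    have hxc' : x' * c = y' * c := by
      have h := madd_mul x' e y' c hxy'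
      rw [hec, madd_comm] at h
      exact (mem_madd_zero _ _).1 h
    -- x * c = x' * c via induction hypothesis
    have hcc : x * c = x' * c := by
      have h1 : x * c ∈ listSum (L.map Prod.fst) := hxc ▸ hyc y hy
      have h2 : x' * c ∈ listSum (L.map Prod.fst) := hxc' ▸ hyc y' hy'
      exact ih (fun q hq => hprops q (List.mem_cons_of_mem _ hq))
        (List.pairwise_cons.1 hpair).2 _ h1 _ h2
    -- conclude via the hyperring property
    have h1mem : (1:A) ∈ madd e c := by rw [hcompl]; rfl
    have hxmem := madd_mul 1 e c x h1mem
    rw [one_mul] at hxmem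
    rw [mul_comm e x, hxe, ← hxe', mul_comm x' e, mul_comm c x, hcc, mul_comm x' c] at hxmem
    obtain ⟨a, ha, hax⟩ := hH x e c x' hxmem
    rw [hcompl] at ha
    have ha1 : a = 1 := ha
    rw [hax, ha1, one_mul]

end Multiring

/-- In a von Neumann hyperring, if `{e₁,…,eₙ}` is a partition of unity whose
members satisfy `eᵢ + eᵢᶜ = {1}`, then `e₁ + ⋯ + eₙ = {1}`. -/
theorem partition_of_unity_sum_eq_one {A : Type u} [Multiring A]
    (hA : Multiring.IsVonNeumann A) (n : ℕ) (e c : Fin n → A)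
    (hidem : ∀ i, e i * e i = e i)
    (horth : ∀ i j, i ≠ j → e i * e j = 0)
    (hc : ∀ i, c i ∈ Multiring.madd 1 (-(e i)) ∧ e i * c i = 0)
    (hunit : (1 : A) ∈ Multiring.listSum (List.ofFn e))
    (hcompl : ∀ i, Multiring.madd (e i) (c i) = {1}) :
    Multiring.listSum (List.ofFn e) = {1} := by
  classical
  set L : List (A × A) := List.ofFn (fun i => (e i, c i)) with hL
  have hmap : L.map Prod.fst = List.ofFn e := by
    rw [hL, List.map_ofFn]
    rfl
  have hpair : L.Pairwise (fun p q => p.1 * q.1 = 0) := by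
    rw [hL, List.pairwise_ofFn]
    intro i j hij
    exact horth i j hij.ne
  have hprops : ∀ p ∈ L, p.1 * p.1 = p.1 ∧ p.2 ∈ Multiring.madd 1 (-p.1) ∧
      p.1 * p.2 = 0 ∧ Multiring.madd p.1 p.2 = {1} := by
    intro p hp
    rw [hL] at hp
    simp only [List.mem_ofFn] at hp
    obtain ⟨i, rfl⟩ := hp
    exact ⟨hidem i, (hc i).1, (hc i).2, hcompl i⟩
  ext x
  simp only [Set.mem_singleton_iff]
  constructor
  · intro hx
    exact Multiring.key_singleton hA.1 L hprops hpair x (by rw [hmap]; exact hx)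
      1 (by rw [hmap]; exact hunit)
  · intro hx
    rw [hx]
    exact hunit
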